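/- Let $(\nu_N)$ be a sequence of positive Borel measures on $[0,\infty)$, all supported in a common bounded interval $[0,R]$, such that for every integer $k\ge 1$, $\int x^k\,d\nu_N(x)\to \frac{c^{k-1}}{k^{h/2}}$ as $N\to\infty$, for some $c > 0$ and positive integer $h$. Then the measures $x\,d\nu_N(x)$ converge weakly to the probability measure $\rho_{c,h}(x)\,dx$, where $\rho_{c,h}(x) = \frac{1}{c\Gamma(h/2)}\chi_{(0,c)}(x)(\log(c/x))^{h/2-1}$. Moreover, for every fixed $t$ with $0 < t\le c$, $\int \chi_{(t,\infty)}(x)\,d\nu_N(x)\to \frac{1}{c\,\Gamma(h/2+1)}(\log(c/t))^{h/2}$. -/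

import Mathlib

open MeasureTheory Real Filter Set


lemma wcfm_deriv (c u : ℝ) : HasDerivAt (fun u => c * Real.exp (-u)) (-(c * Real.exp (-u))) u := by
  have h1 : HasDerivAt (fun u : ℝ => -u) (-1) u := (hasDerivAt_id u).neg
  have h2 := (Real.hasDerivAt_exp (-u)).comp u h1
  have h3 := h2.const_mul c
  exact h3.congr_deriv (by ring)

lemma wcfm_inj (c : ℝ) (hc : 0 < c) : Function.Injective (fun u => c * Real.exp (-u)) := by
  intro a b hab
  simp only at hab
  have h2 := mul_left_cancel₀ hc.ne' hab
  have := Real.exp_injective h2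
  linarith

lemma wcfm_image (c : ℝ) (hc : 0 < c) :
    (fun u => c * Real.exp (-u)) '' Set.Ioi 0 = Set.Ioo 0 c := by
  ext y
  simp only [Set.mem_image, Set.mem_Ioi, Set.mem_Ioo]
  constructor
  · rintro ⟨u, hu, rfl⟩
    refine ⟨by positivity, ?_⟩
    have : Real.exp (-u) < 1 := by rw [Real.exp_lt_one_iff]; linarith
    nlinarith [Real.exp_pos (-u)]
  · rintro ⟨hy0, hyc⟩
    refine ⟨Real.log (c / y), Real.log_pos ((one_lt_div hy0).mpr hyc), ?_⟩
    rw [Real.exp_neg, Real.exp_log (by positivity)]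
    field_simp

lemma wcfm_image2 (c t : ℝ) (hc : 0 < c) (ht : 0 < t) (htc : t ≤ c) :
    (fun u => c * Real.exp (-u)) '' Set.Ioo 0 (Real.log (c / t)) = Set.Ioo t c := by
  have keyt : c * Real.exp (-Real.log (c / t)) = t := by
    rw [Real.exp_neg, Real.exp_log (by positivity)]; field_simp
  ext y
  simp only [Set.mem_image, Set.mem_Ioo]
  constructor
  · rintro ⟨u, ⟨hu0, huL⟩, rfl⟩
    constructor
    · have : Real.exp (-Real.log (c / t)) < Real.exp (-u) := by
        apply Real.exp_lt_exp.mpr; linarith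
      nlinarith
    · have : Real.exp (-u) < 1 := by rw [Real.exp_lt_one_iff]; linarith
      nlinarith [Real.exp_pos (-u)]
  · rintro ⟨hty, hyc⟩
    have hy0 : 0 < y := lt_trans ht hty
    refine ⟨Real.log (c / y), ⟨Real.log_pos ((one_lt_div hy0).mpr hyc), ?_⟩, ?_⟩
    · apply Real.log_lt_log (by positivity)
      exact div_lt_div_of_pos_left hc ht hty
    · rw [Real.exp_neg, Real.exp_log (by positivity)]
      field_simp


lemma wcfm_mom (c : ℝ) (hc : 0 < c) (s : ℝ) (hs : 0 < s) (m : ℕ) :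
    IntegrableOn (fun x => x ^ m * ((1/(c * Real.Gamma s)) * Real.log (c/x) ^ (s-1)))
      (Set.Ioo 0 c) ∧
    ∫ x in Set.Ioo 0 c, x ^ m * ((1/(c * Real.Gamma s)) * Real.log (c/x) ^ (s-1))
      = c ^ m / ((m+1 : ℝ)) ^ s := by
  have hΓ : 0 < Real.Gamma s := Real.Gamma_pos_of_pos hs
  have hder : ∀ u ∈ Set.Ioi (0:ℝ), HasDerivWithinAt (fun u => c * Real.exp (-u))
      (-(c * Real.exp (-u))) (Set.Ioi 0) u := fun u _ => (wcfm_deriv c u).hasDerivWithinAt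
  have hinj : Set.InjOn (fun u => c * Real.exp (-u)) (Set.Ioi 0) :=
    (wcfm_inj c hc).injOn
  set g : ℝ → ℝ := fun x => x ^ m * ((1/(c * Real.Gamma s)) * Real.log (c/x) ^ (s-1)) with hg
  have heq : Set.EqOn (fun u => |(-(c * Real.exp (-u)))| • g ((fun u => c * Real.exp (-u)) u))
      (fun u => (c ^ (m+1) / (c * Real.Gamma s)) * (u ^ (s-1) * Real.exp (-(((m:ℝ)+1) * u))))
      (Set.Ioi 0) := by
    intro u _
    have habs : |(-(c * Real.exp (-u)))| = c * Real.exp (-u) := by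
      rw [abs_neg, abs_of_pos (by positivity)]
    have hlog : Real.log (c / (c * Real.exp (-u))) = u := by
      rw [show c / (c * Real.exp (-u)) = Real.exp u by rw [Real.exp_neg]; field_simp]
      exact Real.log_exp u
    have hexp : Real.exp (-(((m:ℝ)+1) * u)) = Real.exp (-u) ^ (m+1) := by
      rw [← Real.exp_nat_mul]; congr 1; push_cast; ring
    simp only [smul_eq_mul, hg, habs, hlog, hexp, mul_pow]
    ring
  have hval : ∫ u in Set.Ioi (0:ℝ),
      (c ^ (m+1) / (c * Real.Gamma s)) * (u ^ (s-1) * Real.exp (-(((m:ℝ)+1) * u)))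
      = c ^ m / ((m+1 : ℝ)) ^ s := by
    rw [MeasureTheory.integral_const_mul,
      Real.integral_rpow_mul_exp_neg_mul_Ioi hs (by positivity : (0:ℝ) < (m:ℝ)+1)]
    rw [one_div, Real.inv_rpow (by positivity)]
    have h1 : ((m:ℝ)+1) ^ s ≠ 0 := by positivity
    field_simp
    ring
  have hint : IntegrableOn
      (fun u => (c ^ (m+1) / (c * Real.Gamma s)) * (u ^ (s-1) * Real.exp (-(((m:ℝ)+1) * u))))
      (Set.Ioi 0) := by
    have h0 : IntegrableOn (fun u : ℝ => u ^ (s-1) * Real.exp (-((m:ℝ)+1) * u ^ (1:ℝ)))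
        (Set.Ioi 0) :=
      integrableOn_rpow_mul_exp_neg_mul_rpow (by linarith) zero_lt_one (by positivity)
    have h1 : IntegrableOn (fun u : ℝ => u ^ (s-1) * Real.exp (-(((m:ℝ)+1) * u)))
        (Set.Ioi 0) := by
      apply h0.congr_fun ?_ measurableSet_Ioi
      intro u hu
      simp only [Real.rpow_one]; ring_nf
    exact h1.const_mul _
  constructor
  · rw [← wcfm_image c hc,
      integrableOn_image_iff_integrableOn_abs_deriv_smul measurableSet_Ioi hder hinj]
    exact hint.congr_fun heq.symm measurableSet_Ioi
  · rw [← wcfm_image c hc,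
      MeasureTheory.integral_image_eq_integral_abs_deriv_smul measurableSet_Ioi hder hinj,
      MeasureTheory.setIntegral_congr_fun measurableSet_Ioi heq, hval]


lemma wcfm_tail (c : ℝ) (hc : 0 < c) (s : ℝ) (hs : 0 < s) (t : ℝ) (ht : 0 < t) (htc : t ≤ c) :
    IntegrableOn (fun x => x⁻¹ * ((1/(c * Real.Gamma s)) * Real.log (c/x) ^ (s-1)))
      (Set.Ioo t c) ∧
    ∫ x in Set.Ioo t c, x⁻¹ * ((1/(c * Real.Gamma s)) * Real.log (c/x) ^ (s-1))
      = (1 / (c * Real.Gamma (s+1))) * Real.log (c/t) ^ s := by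
  have hΓ : 0 < Real.Gamma s := Real.Gamma_pos_of_pos hs
  set L := Real.log (c / t) with hL
  have hL0 : 0 ≤ L := Real.log_nonneg ((one_le_div ht).mpr htc)
  have hder : ∀ u ∈ Set.Ioo (0:ℝ) L, HasDerivWithinAt (fun u => c * Real.exp (-u))
      (-(c * Real.exp (-u))) (Set.Ioo 0 L) u := fun u _ => (wcfm_deriv c u).hasDerivWithinAt
  have hinj : Set.InjOn (fun u => c * Real.exp (-u)) (Set.Ioo 0 L) :=
    (wcfm_inj c hc).injOn
  set g : ℝ → ℝ := fun x => x⁻¹ * ((1/(c * Real.Gamma s)) * Real.log (c/x) ^ (s-1)) with hg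
  have heq : Set.EqOn (fun u => |(-(c * Real.exp (-u)))| • g ((fun u => c * Real.exp (-u)) u))
      (fun u => (1 / (c * Real.Gamma s)) * u ^ (s-1)) (Set.Ioo 0 L) := by
    intro u _
    have habs : |(-(c * Real.exp (-u)))| = c * Real.exp (-u) := by
      rw [abs_neg, abs_of_pos (by positivity)]
    have hlog : Real.log (c / (c * Real.exp (-u))) = u := by
      rw [show c / (c * Real.exp (-u)) = Real.exp u by rw [Real.exp_neg]; field_simp]
      exact Real.log_exp u
    have hne : c * Real.exp (-u) ≠ 0 := by positivity
    simp only [smul_eq_mul, hg, habs, hlog]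
    field_simp
  have hval : ∫ u in Set.Ioo (0:ℝ) L, (1 / (c * Real.Gamma s)) * u ^ (s-1)
      = (1 / (c * Real.Gamma (s+1))) * L ^ s := by
    rw [← MeasureTheory.integral_Ioc_eq_integral_Ioo,
      ← intervalIntegral.integral_of_le hL0, intervalIntegral.integral_const_mul,
      integral_rpow (Or.inl (by linarith))]
    rw [Real.Gamma_add_one hs.ne']
    rw [sub_add_cancel, Real.zero_rpow hs.ne']
    have : L ^ s - 0 = L ^ s := by ring
    rw [this]
    field_simp
  have hint : IntegrableOn (fun u : ℝ => (1 / (c * Real.Gamma s)) * u ^ (s-1))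
      (Set.Ioo 0 L) := by
    have h0 : IntervalIntegrable (fun u : ℝ => u ^ (s-1)) volume 0 L :=
      intervalIntegral.intervalIntegrable_rpow' (by linarith)
    have h1 : IntegrableOn (fun u : ℝ => u ^ (s-1)) (Set.Ioo 0 L) :=
      ((intervalIntegrable_iff_integrableOn_Ioc_of_le hL0).mp h0).mono_set Set.Ioo_subset_Ioc_self
    exact h1.const_mul _
  constructor
  · rw [← wcfm_image2 c t hc ht htc,
      integrableOn_image_iff_integrableOn_abs_deriv_smul measurableSet_Ioo hder hinj]
    exact hint.congr_fun heq.symm measurableSet_Ioo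
  · rw [← wcfm_image2 c t hc ht htc,
      MeasureTheory.integral_image_eq_integral_abs_deriv_smul measurableSet_Ioo hder hinj,
      MeasureTheory.setIntegral_congr_fun measurableSet_Ioo heq, hval]


theorem wcfm_part1
    (c : ℝ) (hc : 0 < c) (h : ℕ) (hh : 0 < h) (R : ℝ) (hR : 0 < R)
    (ν : ℕ → Measure ℝ) (hfin : ∀ N, IsFiniteMeasure (ν N))
    (hsupp : ∀ N, ν N (Set.Icc 0 R)ᶜ = 0)
    (hmom : ∀ k : ℕ, 1 ≤ k →
      Tendsto (fun N => ∫ x, x ^ k ∂(ν N)) atTop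
        (nhds (c ^ (k - 1) / ((k : ℝ) ^ ((h : ℝ) / 2)))))
    (ρ : ℝ → ℝ)
    (hρ : ∀ x, ρ x = (1 / (c * Real.Gamma ((h : ℝ) / 2))) *
      Real.log (c / x) ^ ((h : ℝ) / 2 - 1)) :
    (∀ f : ℝ → ℝ, Continuous f →
      Tendsto (fun N => ∫ x, x * f x ∂(ν N)) atTop
        (nhds (∫ x in Set.Ioo 0 c, f x * ρ x))) := by
  have hs2 : 0 < (h : ℝ) / 2 := by
    have : (0:ℝ) < (h:ℝ) := by exact_mod_cast hh
    positivity
  have hΓ : 0 < Real.Gamma ((h:ℝ)/2) := Real.Gamma_pos_of_pos hs2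
  -- basic measure facts
  have hmem : ∀ N, ∀ᵐ x ∂(ν N), x ∈ Set.Icc 0 R := by
    intro N
    rw [MeasureTheory.ae_iff]
    simpa [Set.compl_def] using hsupp N
  have hLint : ∀ N, ∀ g : ℝ → ℝ, Continuous g → Integrable g (ν N) := by
    intro N g hg
    haveI := hfin N
    haveI : IsFiniteMeasureOnCompacts (ν N) := ⟨fun _K _ => measure_lt_top _ _⟩
    rw [← Measure.restrict_eq_self_of_ae_mem (hmem N)]
    exact hg.continuousOn.integrableOn_compact isCompact_Icc
  -- facts about ρ
  have hρcont : ContinuousOn ρ (Set.Ioo 0 c) := by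
    rw [show ρ = fun x => (1 / (c * Real.Gamma ((h : ℝ) / 2))) *
      Real.log (c / x) ^ ((h : ℝ) / 2 - 1) from funext hρ]
    apply continuousOn_const.mul
    apply ContinuousOn.rpow_const
    · apply ContinuousOn.log
      · exact continuousOn_const.div continuousOn_id (fun x hx => hx.1.ne')
      · intro x hx
        exact (div_pos hc hx.1).ne'
    · intro x hx
      exact Or.inl (Real.log_pos ((one_lt_div hx.1).mpr hx.2)).ne'
  have hρnn : ∀ x ∈ Set.Ioo (0:ℝ) c, 0 ≤ ρ x := by
    intro x hx
    rw [hρ]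
    have : 0 ≤ Real.log (c / x) :=
      Real.log_nonneg ((one_le_div hx.1).mpr hx.2.le)
    positivity
  have hmomρint : ∀ m : ℕ, IntegrableOn (fun x => x ^ m * ρ x) (Set.Ioo 0 c) := by
    intro m
    simp only [hρ]
    exact (wcfm_mom c hc _ hs2 m).1
  have hmomρval : ∀ m : ℕ, ∫ x in Set.Ioo 0 c, x ^ m * ρ x
      = c ^ m / ((m+1 : ℝ)) ^ ((h:ℝ)/2) := by
    intro m
    simp only [hρ]
    exact (wcfm_mom c hc _ hs2 m).2
  have hρint : IntegrableOn ρ (Set.Ioo 0 c) := by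
    have := hmomρint 0
    simpa using this
  have hρsum : ∫ x in Set.Ioo 0 c, ρ x = 1 := by
    have := hmomρval 0
    simpa using this
  have hint_mulρ : ∀ g : ℝ → ℝ, Continuous g →
      IntegrableOn (fun x => g x * ρ x) (Set.Ioo 0 c) := by
    intro g hg
    obtain ⟨B, hB⟩ := IsCompact.exists_bound_of_continuousOn
      (isCompact_Icc (a := (0:ℝ)) (b := c)) hg.continuousOn
    apply Integrable.mono' (hρint.const_mul B)
      ((hg.continuousOn.mul hρcont).aestronglyMeasurable measurableSet_Ioo)
    rw [ae_restrict_iff' measurableSet_Ioo]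
    filter_upwards with x
    intro hx
    have h1 : 0 ≤ ρ x := hρnn x hx
    have h2 : |g x| ≤ B := hB x ⟨hx.1.le, hx.2.le⟩
    rw [Real.norm_eq_abs, Pi.mul_apply, abs_mul, abs_of_nonneg h1]
    exact mul_le_mul_of_nonneg_right h2 h1
  -- convergence for polynomials
  have hpoly : ∀ p : Polynomial ℝ,
      Tendsto (fun N => ∫ x, x * p.eval x ∂(ν N)) atTop
        (nhds (∫ x in Set.Ioo 0 c, p.eval x * ρ x)) := by
    intro p
    set n := p.natDegree with hn
    have hfun : (fun x : ℝ => x * p.eval x)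
        = fun x => ∑ i ∈ Finset.range (n+1), p.coeff i * x ^ (i+1) := by
      funext x
      rw [Polynomial.eval_eq_sum_range, Finset.mul_sum]
      exact Finset.sum_congr rfl fun i _ => by ring
    have hcoef : ∀ N, ∫ x, x * p.eval x ∂(ν N)
        = ∑ i ∈ Finset.range (n+1), p.coeff i * ∫ x, x ^ (i+1) ∂(ν N) := by
      intro N
      rw [hfun, MeasureTheory.integral_finset_sum]
      · exact Finset.sum_congr rfl fun i _ => MeasureTheory.integral_const_mul _ _
      · intro i _
        exact (hLint N _ (continuous_const.mul (continuous_pow (i+1))))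
    have hvalfun : ∀ x ∈ Set.Ioo (0:ℝ) c, p.eval x * ρ x
        = ∑ i ∈ Finset.range (n+1), p.coeff i * (x ^ i * ρ x) := by
      intro x _
      rw [Polynomial.eval_eq_sum_range, Finset.sum_mul]
      exact Finset.sum_congr rfl fun i _ => by ring
    have hval : ∫ x in Set.Ioo 0 c, p.eval x * ρ x
        = ∑ i ∈ Finset.range (n+1), p.coeff i * (c ^ i / ((i+1 : ℝ)) ^ ((h:ℝ)/2)) := by
      rw [MeasureTheory.setIntegral_congr_fun measurableSet_Ioo hvalfun,
        MeasureTheory.integral_finset_sum]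
      · refine Finset.sum_congr rfl fun i _ => ?_
        rw [MeasureTheory.integral_const_mul, hmomρval i]
      · intro i _
        exact ((hmomρint i).const_mul _)
    rw [hval, show (fun N => ∫ x, x * p.eval x ∂(ν N))
        = fun N => ∑ i ∈ Finset.range (n+1), p.coeff i * ∫ x, x ^ (i+1) ∂(ν N) from
        funext hcoef]
    apply tendsto_finset_sum
    intro i _
    have h1 := hmom (i+1) (by omega)
    have h2 : (i+1:ℕ) - 1 = i := by omega
    rw [h2] at h1
    have h3 : ((i+1:ℕ) : ℝ) = (i+1 : ℝ) := by push_cast; ring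
    rw [h3] at h1
    exact h1.const_mul _
  -- main epsilon argument
  intro f hf
  rw [Metric.tendsto_atTop]
  intro ε hε
  set D := max R c with hD
  have hRD : R ≤ D := le_max_left _ _
  have hcD : c ≤ D := le_max_right _ _
  obtain ⟨p, hp⟩ := exists_polynomial_near_of_continuousOn 0 D f hf.continuousOn (ε/8)
    (by positivity)
  have hm1 : Tendsto (fun N => ∫ x, x ∂(ν N)) atTop (nhds 1) := by
    have := hmom 1 le_rfl
    simpa using this
  have hev1 : ∀ᶠ N in atTop, ∫ x, x ∂(ν N) ≤ 2 :=
    hm1.eventually (eventually_le_nhds (by norm_num))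
  have hev2 : ∀ᶠ N in atTop,
      dist (∫ x, x * p.eval x ∂(ν N)) (∫ x in Set.Ioo 0 c, p.eval x * ρ x) < ε/2 := by
    have := (hpoly p).eventually (Metric.ball_mem_nhds
      (∫ x in Set.Ioo 0 c, p.eval x * ρ x) (by positivity : (0:ℝ) < ε/2))
    simpa [Metric.mem_ball] using this
  obtain ⟨N0, hN0⟩ := Filter.eventually_atTop.mp (hev1.and hev2)
  refine ⟨N0, fun N hN => ?_⟩
  obtain ⟨hb1, hb2⟩ := hN0 N hN
  -- bound 1
  have hIf : Integrable (fun x => x * f x) (ν N) := hLint N _ (continuous_id.mul hf)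
  have hIp : Integrable (fun x => x * p.eval x) (ν N) :=
    hLint N _ (continuous_id.mul p.continuous)
  have hI1 : |(∫ x, x * f x ∂(ν N)) - ∫ x, x * p.eval x ∂(ν N)| ≤ ε/4 := by
    rw [← MeasureTheory.integral_sub hIf hIp]
    have hb : ‖∫ x, (x * f x - x * p.eval x) ∂(ν N)‖ ≤ ∫ x, (ε/8) * x ∂(ν N) := by
      apply MeasureTheory.norm_integral_le_of_norm_le
        (hLint N _ (continuous_const.mul continuous_id))
      filter_upwards [hmem N] with x hx
      have hpx : |f x - p.eval x| ≤ ε/8 := by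
        rw [abs_sub_comm]
        exact (hp x ⟨hx.1, le_trans hx.2 hRD⟩).le
      simp only [Real.norm_eq_abs]
      calc |x * f x - x * p.eval x| = x * |f x - p.eval x| := by
            rw [show x * f x - x * p.eval x = x * (f x - p.eval x) by ring, abs_mul,
              abs_of_nonneg hx.1]
        _ ≤ x * (ε/8) := mul_le_mul_of_nonneg_left hpx hx.1
        _ = ε/8 * x := by ring
    rw [Real.norm_eq_abs] at hb
    calc |∫ x, (x * f x - x * p.eval x) ∂(ν N)| ≤ ∫ x, (ε/8) * x ∂(ν N) := hb
      _ = (ε/8) * ∫ x, x ∂(ν N) := MeasureTheory.integral_const_mul _ _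
      _ ≤ (ε/8) * 2 := by
          apply mul_le_mul_of_nonneg_left hb1 (by positivity)
      _ = ε/4 := by ring
  -- bound 3
  have hI3 : |(∫ x in Set.Ioo 0 c, p.eval x * ρ x) - ∫ x in Set.Ioo 0 c, f x * ρ x| ≤ ε/8 := by
    rw [← MeasureTheory.integral_sub (hint_mulρ _ p.continuous) (hint_mulρ f hf)]
    have hb : ‖∫ x in Set.Ioo 0 c, (p.eval x * ρ x - f x * ρ x)‖
        ≤ ∫ x in Set.Ioo 0 c, (ε/8) * ρ x := by
      apply MeasureTheory.norm_integral_le_of_norm_le (hρint.const_mul (ε/8))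
      rw [ae_restrict_iff' measurableSet_Ioo]
      filter_upwards with x
      intro hx
      have h1 : 0 ≤ ρ x := hρnn x hx
      have hpx : |p.eval x - f x| ≤ ε/8 := (hp x ⟨hx.1.le, hx.2.le.trans hcD⟩).le
      simp only [Real.norm_eq_abs]
      calc |p.eval x * ρ x - f x * ρ x| = |p.eval x - f x| * ρ x := by
            rw [show p.eval x * ρ x - f x * ρ x = (p.eval x - f x) * ρ x by ring, abs_mul,
              abs_of_nonneg h1]
        _ ≤ ε/8 * ρ x := mul_le_mul_of_nonneg_right hpx h1
    rw [Real.norm_eq_abs] at hb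
    calc |∫ x in Set.Ioo 0 c, (p.eval x * ρ x - f x * ρ x)|
        ≤ ∫ x in Set.Ioo 0 c, (ε/8) * ρ x := hb
      _ = (ε/8) * ∫ x in Set.Ioo 0 c, ρ x := MeasureTheory.integral_const_mul _ _
      _ = ε/8 := by rw [hρsum]; ring
  have htri := dist_triangle4 (∫ x, x * f x ∂(ν N)) (∫ x, x * p.eval x ∂(ν N))
    (∫ x in Set.Ioo 0 c, p.eval x * ρ x) (∫ x in Set.Ioo 0 c, f x * ρ x)
  simp only [Real.dist_eq] at htri hb2 ⊢
  linarith


theorem wcfm_part2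
    (c : ℝ) (hc : 0 < c) (h : ℕ) (hh : 0 < h) (R : ℝ) (hR : 0 < R)
    (ν : ℕ → Measure ℝ) (hfin : ∀ N, IsFiniteMeasure (ν N))
    (ρ : ℝ → ℝ)
    (hs2 : 0 < (h : ℝ) / 2)
    (hmem : ∀ N, ∀ᵐ x ∂(ν N), x ∈ Set.Icc 0 R)
    (hLint : ∀ N, ∀ g : ℝ → ℝ, Continuous g → Integrable g (ν N))
    (hρnn : ∀ x ∈ Set.Ioo (0:ℝ) c, 0 ≤ ρ x)
    (hint_mulρ : ∀ g : ℝ → ℝ, Continuous g →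
      IntegrableOn (fun x => g x * ρ x) (Set.Ioo 0 c))
    (htail : ∀ a, 0 < a → a ≤ c →
      IntegrableOn (fun x => x⁻¹ * ρ x) (Set.Ioo a c) ∧
      ∫ x in Set.Ioo a c, x⁻¹ * ρ x
        = (1 / (c * Real.Gamma ((h : ℝ) / 2 + 1))) * Real.log (c/a) ^ ((h:ℝ)/2))
    (hpart1 : ∀ f : ℝ → ℝ, Continuous f →
      Tendsto (fun N => ∫ x, x * f x ∂(ν N)) atTop
        (nhds (∫ x in Set.Ioo 0 c, f x * ρ x))) :
    (∀ t : ℝ, 0 < t → t ≤ c →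
      Tendsto (fun N => ((ν N) (Set.Ioi t)).toReal) atTop
        (nhds ((1 / (c * Real.Gamma ((h : ℝ) / 2 + 1))) *
          Real.log (c / t) ^ ((h : ℝ) / 2)))) := by
  intro t ht htc
  set K := 1 / (c * Real.Gamma ((h : ℝ) / 2 + 1)) with hK
  set T := K * Real.log (c / t) ^ ((h : ℝ) / 2) with hT
  rw [Metric.tendsto_atTop]
  intro ε hε
  -- continuity of the tail value function
  have hGcont : ContinuousAt (fun a => K * Real.log (c / a) ^ ((h:ℝ)/2)) t := by
    apply ContinuousAt.mul continuousAt_const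
    apply ContinuousAt.rpow_const ?_ (Or.inr hs2.le)
    exact (Real.continuousAt_log (by positivity)).comp
      (continuousAt_const.div continuousAt_id ht.ne')
  rw [Metric.continuousAt_iff] at hGcont
  obtain ⟨δ₀, hδ₀, hG⟩ := hGcont (ε/2) (by positivity)
  -- upper bound part
  set δu := min (δ₀/2) (t/2) with hδu
  have hδu0 : 0 < δu := lt_min (by positivity) (by positivity)
  set a := t - δu with ha
  have ha0 : 0 < a := by
    have : δu ≤ t/2 := min_le_right _ _
    simp only [ha]; linarith
  have hat : a < t := by simp only [ha]; linarith
  have hac : a < c := lt_of_lt_of_le hat htc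
  have haG : |K * Real.log (c / a) ^ ((h:ℝ)/2) - T| < ε/2 := by
    have : dist a t < δ₀ := by
      rw [Real.dist_eq, ha]
      have h1 : δu ≤ δ₀/2 := min_le_left _ _
      rw [abs_of_nonpos (by linarith)]
      linarith
    have := hG this
    rwa [Real.dist_eq] at this
  set f₂ : ℝ → ℝ := fun x => (min 1 (max ((x - a)/δu) 0)) / max x a with hf₂
  have hf₂cont : Continuous f₂ := by
    apply Continuous.div
    · exact continuous_const.min (((continuous_id.sub continuous_const).div_const δu).max
        continuous_const)
    · exact continuous_id.max continuous_const
    · intro x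
      exact (lt_of_lt_of_le ha0 (le_max_right x a)).ne'
  have hf₂nn : ∀ x, 0 ≤ f₂ x := by
    intro x
    apply div_nonneg
    · exact le_min zero_le_one (le_max_right _ _)
    · exact (lt_of_lt_of_le ha0 (le_max_right x a)).le
  have hupA : ∀ N, ((ν N) (Set.Ioi t)).toReal ≤ ∫ x, x * f₂ x ∂(ν N) := by
    intro N
    haveI := hfin N
    rw [← measureReal_def, ← MeasureTheory.integral_indicator_one (measurableSet_Ioi (a := t))]
    apply MeasureTheory.integral_mono_ae
      ((integrable_const (1:ℝ)).indicator measurableSet_Ioi)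
      (hLint N _ (continuous_id.mul hf₂cont))
    filter_upwards [hmem N] with x hx
    by_cases hxt : x ∈ Set.Ioi t
    · rw [Set.indicator_of_mem hxt]
      have hx0 : t < x := hxt
      have hmax : max x a = x := max_eq_left (le_of_lt (lt_trans hat hx0))
      have hmin : min 1 (max ((x - a)/δu) 0) = 1 := by
        apply min_eq_left
        apply le_max_of_le_left
        rw [le_div_iff₀ hδu0]
        simp only [ha]; linarith
      have hx0' : (0:ℝ) < x := lt_trans ht hx0
      simp only [hf₂, hmax, hmin, Set.indicator_of_mem hxt, Pi.one_apply, Pi.mul_apply, id_eq]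
      rw [mul_one_div, div_self hx0'.ne']
    · rw [Set.indicator_of_notMem hxt]
      exact mul_nonneg hx.1 (hf₂nn x)
  have hupB : ∫ x in Set.Ioo 0 c, f₂ x * ρ x
      ≤ K * Real.log (c / a) ^ ((h:ℝ)/2) := by
    have hzero : ∫ x in Set.Ioc 0 a, f₂ x * ρ x = 0 := by
      rw [MeasureTheory.setIntegral_congr_fun measurableSet_Ioc
        (g := fun _ => (0:ℝ)) ?_, MeasureTheory.integral_zero]
      intro x hx
      have : (x - a)/δu ≤ 0 := div_nonpos_of_nonpos_of_nonneg (by linarith [hx.2]) hδu0.le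
      simp only [hf₂]
      rw [max_eq_right this, min_eq_right zero_le_one, zero_div, zero_mul]
    have hdisj : Disjoint (Set.Ioc 0 a) (Set.Ioo a c) := by
      rw [Set.disjoint_left]
      rintro x ⟨_, hx2⟩ ⟨hx3, _⟩
      exact absurd hx3 (not_lt.mpr hx2)
    have hint2 : IntegrableOn (fun x => f₂ x * ρ x) (Set.Ioo 0 c) := hint_mulρ f₂ hf₂cont
    have hsplit : ∫ x in Set.Ioo 0 c, f₂ x * ρ x = ∫ x in Set.Ioo a c, f₂ x * ρ x := by
      rw [← Set.Ioc_union_Ioo_eq_Ioo ha0.le hac,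
        MeasureTheory.setIntegral_union hdisj measurableSet_Ioo
          (hint2.mono_set (by rw [← Set.Ioc_union_Ioo_eq_Ioo ha0.le hac]; exact Set.subset_union_left))
          (hint2.mono_set (by rw [← Set.Ioc_union_Ioo_eq_Ioo ha0.le hac]; exact Set.subset_union_right)),
        hzero, zero_add]
    rw [hsplit, ← (htail a ha0 hac.le).2]
    apply MeasureTheory.setIntegral_mono_on
      (hint2.mono_set (by rw [← Set.Ioc_union_Ioo_eq_Ioo ha0.le hac]; exact Set.subset_union_right))
      (htail a ha0 hac.le).1 measurableSet_Ioo
    intro x hx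
    have hx0 : 0 < x := lt_trans ha0 hx.1
    have hρx : 0 ≤ ρ x := hρnn x ⟨hx0, hx.2⟩
    apply mul_le_mul_of_nonneg_right ?_ hρx
    calc f₂ x ≤ 1 / x :=
        div_le_div₀ zero_le_one (min_le_left _ _) hx0 (le_max_left x a)
      _ = x⁻¹ := one_div x
  have hupC := (hpart1 f₂ hf₂cont).eventually (Metric.ball_mem_nhds _
    (by positivity : (0:ℝ) < ε/2))
  -- lower bound part
  have hlow : ∀ᶠ N in atTop, T - ε < ((ν N) (Set.Ioi t)).toReal := by
    rcases eq_or_lt_of_le htc with rfl | htlt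
    · -- t = c : T = 0
      have hT0 : T = 0 := by
        rw [hT, div_self hc.ne', Real.log_one, Real.zero_rpow hs2.ne', mul_zero]
      filter_upwards with N
      rw [hT0]
      have : (0:ℝ) ≤ ((ν N) (Set.Ioi t)).toReal := ENNReal.toReal_nonneg
      linarith
    · set δl := min (δ₀/2) ((c - t)/2) with hδl
      have hδl0 : 0 < δl := lt_min (by positivity) (by linarith)
      set b := t + δl with hb
      have htb : t < b := by simp only [hb]; linarith
      have hbc : b < c := by
        have : δl ≤ (c - t)/2 := min_le_right _ _
        simp only [hb]; linarith
      have hb0 : 0 < b := lt_trans ht htb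
      have hbG : |K * Real.log (c / b) ^ ((h:ℝ)/2) - T| < ε/2 := by
        have : dist b t < δ₀ := by
          rw [Real.dist_eq, hb]
          have h1 : δl ≤ δ₀/2 := min_le_left _ _
          rw [abs_of_nonneg (by linarith)]
          linarith
        have := hG this
        rwa [Real.dist_eq] at this
      set f₁ : ℝ → ℝ := fun x => (min 1 (max ((x - t)/δl) 0)) / max x t with hf₁
      have hf₁cont : Continuous f₁ := by
        apply Continuous.div
        · exact continuous_const.min (((continuous_id.sub continuous_const).div_const δl).max
            continuous_const)
        · exact continuous_id.max continuous_const
        · intro x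
          exact (lt_of_lt_of_le ht (le_max_right x t)).ne'
      have hf₁nn : ∀ x, 0 ≤ f₁ x := by
        intro x
        apply div_nonneg
        · exact le_min zero_le_one (le_max_right _ _)
        · exact (lt_of_lt_of_le ht (le_max_right x t)).le
      have hlowA : ∀ N, ∫ x, x * f₁ x ∂(ν N) ≤ ((ν N) (Set.Ioi t)).toReal := by
        intro N
        haveI := hfin N
        rw [← measureReal_def, ← MeasureTheory.integral_indicator_one (measurableSet_Ioi (a := t))]
        apply MeasureTheory.integral_mono_ae
          (hLint N _ (continuous_id.mul hf₁cont))
          ((integrable_const (1:ℝ)).indicator measurableSet_Ioi)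
        filter_upwards [hmem N] with x hx
        by_cases hxt : x ∈ Set.Ioi t
        · rw [Set.indicator_of_mem hxt]
          have hx0 : t < x := hxt
          have hmax : max x t = x := max_eq_left (le_of_lt hx0)
          simp only [hf₁, hmax, Pi.mul_apply, id_eq]
          calc x * (min 1 (max ((x - t)/δl) 0) / x)
              = min 1 (max ((x - t)/δl) 0) := by
                rw [mul_comm, div_mul_eq_mul_div, mul_div_assoc,
                  div_self (lt_trans ht hx0).ne', mul_one]
            _ ≤ 1 := min_le_left _ _
        · rw [Set.indicator_of_notMem hxt]
          have hxle : x ≤ t := not_lt.mp hxt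
          have : (x - t)/δl ≤ 0 := div_nonpos_of_nonpos_of_nonneg (by linarith) hδl0.le
          simp only [hf₁, Pi.mul_apply, id_eq]
          rw [max_eq_right this, min_eq_right zero_le_one, zero_div, mul_zero]
      have hlowB : K * Real.log (c / b) ^ ((h:ℝ)/2) ≤ ∫ x in Set.Ioo 0 c, f₁ x * ρ x := by
        rw [← (htail b hb0 hbc.le).2]
        have heqb : ∫ x in Set.Ioo b c, x⁻¹ * ρ x = ∫ x in Set.Ioo b c, f₁ x * ρ x := by
          apply MeasureTheory.setIntegral_congr_fun measurableSet_Ioo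
          intro x hx
          have hx0 : 0 < x := lt_trans hb0 hx.1
          have hmax : max x t = x := max_eq_left (le_of_lt (lt_trans htb hx.1))
          have hmin : min 1 (max ((x - t)/δl) 0) = 1 := by
            apply min_eq_left
            apply le_max_of_le_left
            rw [le_div_iff₀ hδl0]
            have := hx.1
            simp only [hb] at this ⊢
            linarith
          simp only [hf₁, hmax, hmin]
          rw [one_div]
        rw [heqb]
        apply MeasureTheory.setIntegral_mono_set (hint_mulρ f₁ hf₁cont)
        · rw [Filter.EventuallyLE]
          rw [ae_restrict_iff' measurableSet_Ioo]
          filter_upwards with x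
          intro hx
          exact mul_nonneg (hf₁nn x) (hρnn x hx)
        · exact Filter.Eventually.of_forall
            (fun x hx => ⟨lt_trans hb0 hx.1, hx.2⟩)
      have hlowC := (hpart1 f₁ hf₁cont).eventually (Metric.ball_mem_nhds _
        (by positivity : (0:ℝ) < ε/2))
      filter_upwards [hlowC] with N hN
      rw [Real.dist_eq] at hN
      have h1 := hlowA N
      have h2 := hlowB
      have h3 := abs_lt.mp hN
      have h4 := abs_lt.mp hbG
      linarith
  -- combine
  rw [Filter.eventually_atTop] at hlow
  obtain ⟨N1, hN1⟩ := hlow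
  rw [Filter.eventually_atTop] at hupC
  obtain ⟨N2, hN2⟩ := hupC
  refine ⟨max N1 N2, fun N hN => ?_⟩
  have hN1' := hN1 N (le_trans (le_max_left _ _) hN)
  have hN2' := hN2 N (le_trans (le_max_right _ _) hN)
  rw [Real.dist_eq] at hN2'
  have h1 := hupA N
  have h2 := hupB
  have h3 := abs_lt.mp hN2'
  have h4 := abs_lt.mp haG
  rw [Real.dist_eq, abs_lt]
  constructor <;> linarith


/-- Weak convergence from moments: if the measures `ν_N` are supported in a common
bounded interval `[0,R]` and `∫ x^k dν_N → c^{k-1}/k^{h/2}` for all `k ≥ 1`,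
then `x dν_N(x)` converges weakly to `ρ_{c,h}(x) dx`, and the superlevel masses
satisfy `ν_N((t,∞)) → (1/(c Γ(h/2+1))) (log(c/t))^{h/2}` for `0 < t ≤ c`. -/
theorem weak_convergence_from_moments
    (c : ℝ) (hc : 0 < c) (h : ℕ) (hh : 0 < h) (R : ℝ) (hR : 0 < R)
    (ν : ℕ → Measure ℝ) (hfin : ∀ N, IsFiniteMeasure (ν N))
    (hsupp : ∀ N, ν N (Set.Icc 0 R)ᶜ = 0)
    (hmom : ∀ k : ℕ, 1 ≤ k →
      Tendsto (fun N => ∫ x, x ^ k ∂(ν N)) atTop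
        (nhds (c ^ (k - 1) / ((k : ℝ) ^ ((h : ℝ) / 2)))))
    (ρ : ℝ → ℝ)
    (hρ : ∀ x, ρ x = (1 / (c * Real.Gamma ((h : ℝ) / 2))) *
      Real.log (c / x) ^ ((h : ℝ) / 2 - 1)) :
    (∀ f : ℝ → ℝ, Continuous f →
      Tendsto (fun N => ∫ x, x * f x ∂(ν N)) atTop
        (nhds (∫ x in Set.Ioo 0 c, f x * ρ x))) ∧
    (∀ t : ℝ, 0 < t → t ≤ c →
      Tendsto (fun N => ((ν N) (Set.Ioi t)).toReal) atTop
        (nhds ((1 / (c * Real.Gamma ((h : ℝ) / 2 + 1))) *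
          Real.log (c / t) ^ ((h : ℝ) / 2)))) := by
  have hs2 : 0 < (h : ℝ) / 2 := by
    have : (0:ℝ) < (h:ℝ) := by exact_mod_cast hh
    positivity
  have hΓ : 0 < Real.Gamma ((h:ℝ)/2) := Real.Gamma_pos_of_pos hs2
  have hmem : ∀ N, ∀ᵐ x ∂(ν N), x ∈ Set.Icc 0 R := by
    intro N
    rw [MeasureTheory.ae_iff]
    simpa [Set.compl_def] using hsupp N
  have hLint : ∀ N, ∀ g : ℝ → ℝ, Continuous g → Integrable g (ν N) := by
    intro N g hg
    haveI := hfin N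
    haveI : IsFiniteMeasureOnCompacts (ν N) := ⟨fun _K _ => measure_lt_top _ _⟩
    rw [← Measure.restrict_eq_self_of_ae_mem (hmem N)]
    exact hg.continuousOn.integrableOn_compact isCompact_Icc
  have hρcont : ContinuousOn ρ (Set.Ioo 0 c) := by
    rw [show ρ = fun x => (1 / (c * Real.Gamma ((h : ℝ) / 2))) *
      Real.log (c / x) ^ ((h : ℝ) / 2 - 1) from funext hρ]
    apply continuousOn_const.mul
    apply ContinuousOn.rpow_const
    · apply ContinuousOn.log
      · exact continuousOn_const.div continuousOn_id (fun x hx => hx.1.ne')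
      · intro x hx
        exact (div_pos hc hx.1).ne'
    · intro x hx
      exact Or.inl (Real.log_pos ((one_lt_div hx.1).mpr hx.2)).ne'
  have hρnn : ∀ x ∈ Set.Ioo (0:ℝ) c, 0 ≤ ρ x := by
    intro x hx
    rw [hρ]
    have : 0 ≤ Real.log (c / x) :=
      Real.log_nonneg ((one_le_div hx.1).mpr hx.2.le)
    positivity
  have hρint : IntegrableOn ρ (Set.Ioo 0 c) := by
    have h0 : IntegrableOn (fun x => x ^ 0 * ρ x) (Set.Ioo 0 c) := by
      simp only [hρ]
      exact (wcfm_mom c hc _ hs2 0).1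
    simpa using h0
  have hint_mulρ : ∀ g : ℝ → ℝ, Continuous g →
      IntegrableOn (fun x => g x * ρ x) (Set.Ioo 0 c) := by
    intro g hg
    obtain ⟨B, hB⟩ := IsCompact.exists_bound_of_continuousOn
      (isCompact_Icc (a := (0:ℝ)) (b := c)) hg.continuousOn
    apply Integrable.mono' (hρint.const_mul B)
      ((hg.continuousOn.mul hρcont).aestronglyMeasurable measurableSet_Ioo)
    rw [ae_restrict_iff' measurableSet_Ioo]
    filter_upwards with x
    intro hx
    have h1 : 0 ≤ ρ x := hρnn x hx
    have h2 : |g x| ≤ B := hB x ⟨hx.1.le, hx.2.le⟩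
    rw [Real.norm_eq_abs, Pi.mul_apply, abs_mul, abs_of_nonneg h1]
    exact mul_le_mul_of_nonneg_right h2 h1
  have htail : ∀ a, 0 < a → a ≤ c →
      IntegrableOn (fun x => x⁻¹ * ρ x) (Set.Ioo a c) ∧
      ∫ x in Set.Ioo a c, x⁻¹ * ρ x
        = (1 / (c * Real.Gamma ((h : ℝ) / 2 + 1))) * Real.log (c/a) ^ ((h:ℝ)/2) := by
    intro a h1 h2
    simp only [hρ]
    exact wcfm_tail c hc ((h:ℝ)/2) hs2 a h1 h2
  have hp1 := wcfm_part1 c hc h hh R hR ν hfin hsupp hmom ρ hρ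
  exact ⟨hp1, wcfm_part2 c hc h hh R hR ν hfin ρ hs2 hmem hLint hρnn hint_mulρ htail hp1⟩
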